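/- arXiv:1304.7804 — 2 statements merged into one kernel-verified Lean document; each statement's English description precedes it below -/
import Mathlib

section
/- If α and β are assemblies producible at temperature τ in the hierarchical model, α and β are consistent (they agree on every position in dom α ∩ dom β), and dom α ∩ dom β ≠ ∅, then the assembly α ∪ β is producible at temperature τ in the hierarchical model. -/
/-- A tile system over a type `T` of tile types: each tile type has, in each
direction (unit vector of `ℤ × ℤ`), a glue label (a natural number `ℕ`), and
each glue label has a nonnegative integer strength given by `str`. -/
structure TileSystem (T : Type) where
  glue : T → ℤ × ℤ → ℕ
  str : ℕ → ℕ

/-- The four unit-vector directions of `ℤ²`. -/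
def dirs : Finset (ℤ × ℤ) := {(0,1), (0,-1), (1,0), (-1,0)}

/-- An assembly: a partial function from `ℤ²` to tile types. -/
abbrev Assembly (T : Type) := ℤ × ℤ → Option T

/-- `D` is the domain of the assembly `α`. -/
def IsDom {T : Type} (α : Assembly T) (D : Finset (ℤ × ℤ)) : Prop :=
  ∀ p, (α p).isSome ↔ p ∈ D

/-- The strength of the bond between positions `p` and `q` in `α`: it is the
strength of the common glue if `q - p` is a unit direction and the glue of the
tile at `p` in direction `q - p` matches the glue of the tile at `q` in
direction `p - q`; otherwise `0`. -/
def bond {T : Type} (ts : TileSystem T) (α : Assembly T) (p q : ℤ × ℤ) : ℕ :=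
  match α p, α q with
  | some t, some t' =>
      if q - p ∈ dirs ∧ ts.glue t (q - p) = ts.glue t' (p - q)
      then ts.str (ts.glue t (q - p)) else 0
  | _, _ => 0

/-- Two positions of `α` interact if they hold tiles binding with positive strength. -/
def Interacts {T : Type} (ts : TileSystem T) (α : Assembly T) (p q : ℤ × ℤ) : Prop :=
  0 < bond ts α p q

/-- Total strength of the interacting glues between positions in `A` and
(adjacent) positions in `B`. -/
def strengthBetween {T : Type} (ts : TileSystem T) (α : Assembly T)
    (A B : Finset (ℤ × ℤ)) : ℕ :=
  ∑ p ∈ A, ∑ q ∈ B, bond ts α p q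

/-- `α` is `τ`-stable: every partition of its domain into two nonempty parts is
crossed by interacting glues of total strength at least `τ`. -/
def Stable {T : Type} (ts : TileSystem T) (α : Assembly T) (τ : ℕ) : Prop :=
  ∀ D A B : Finset (ℤ × ℤ), IsDom α D → A ∪ B = D → Disjoint A B →
    A.Nonempty → B.Nonempty → τ ≤ strengthBetween ts α A B

/-- The union of two assemblies (agreeing with `α` wherever `α` is defined). -/
def aunion {T : Type} (α β : Assembly T) : Assembly T :=
  fun p => match α p with
    | some t => some t
    | none => β p

/-- Producibility in the hierarchical model at temperature `τ`: an assembly is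
producible if it is a single tile, or the `τ`-stable union of two producible
assemblies with disjoint domains. -/
inductive Producible {T : Type} (ts : TileSystem T) (τ : ℕ) : Assembly T → Prop where
  | single (p : ℤ × ℤ) (t : T) :
      Producible ts τ (fun q => if q = p then some t else none)
  | union {α β : Assembly T} :
      Producible ts τ α → Producible ts τ β →
      (∀ p, α p = none ∨ β p = none) →
      Stable ts (aunion α β) τ →
      Producible ts τ (aunion α β)

/-- Two assemblies are consistent if they agree wherever both are defined. -/
def Consistent {T : Type} (α β : Assembly T) : Prop :=
  ∀ p t t', α p = some t → β p = some t' → t = t'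

/-- `α` is a subassembly of `β`. -/
def Subassembly {T : Type} (α β : Assembly T) : Prop :=
  ∀ p t, α p = some t → β p = some t

/-- A producible assembly is terminal if no producible assembly can stably attach to it. -/
def Terminal {T : Type} (ts : TileSystem T) (τ : ℕ) (α : Assembly T) : Prop :=
  ∀ β : Assembly T, Producible ts τ β → (∀ p, α p = none ∨ β p = none) →
    ¬ Stable ts (aunion α β) τ

/-- The hierarchical system uniquely produces `α` if the set of producible
terminal assemblies equals `{α}`. -/
def UniquelyProduces {T : Type} (ts : TileSystem T) (τ : ℕ) (α : Assembly T) : Prop :=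
  {γ : Assembly T | Producible ts τ γ ∧ Terminal ts τ γ} = {α}

/-- `𝒞` is a partition of the finite set `D`: pairwise disjoint nonempty parts
whose union is `D`. -/
def IsPartition (𝒞 : Finset (Finset (ℤ × ℤ))) (D : Finset (ℤ × ℤ)) : Prop :=
  (∀ C ∈ 𝒞, C.Nonempty) ∧
  (∀ C₁ ∈ 𝒞, ∀ C₂ ∈ 𝒞, C₁ ≠ C₂ → Disjoint C₁ C₂) ∧
  𝒞.sup id = D

section Aux

variable {T : Type}

lemma aunion_some_left {α β : Assembly T} {p t} (h : α p = some t) :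
    aunion α β p = some t := by unfold aunion; rw [h]

lemma aunion_none_left {α β : Assembly T} {p} (h : α p = none) :
    aunion α β p = β p := by unfold aunion; rw [h]

lemma aunion_isSome {α β : Assembly T} {p} :
    (aunion α β p).isSome ↔ (α p).isSome ∨ (β p).isSome := by
  unfold aunion; cases h : α p <;> simp

lemma aunion_assoc (a b c : Assembly T) :
    aunion (aunion a b) c = aunion a (aunion b c) := by
  funext p; unfold aunion; cases a p <;> simp

lemma aunion_comm_of_disjoint {a b : Assembly T}
    (h : ∀ p, a p = none ∨ b p = none) : aunion a b = aunion b a := by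
  funext p
  rcases h p with h' | h'
  · rw [aunion_none_left h']
    cases hb : b p with
    | none => rw [aunion_none_left hb, h']
    | some t => rw [aunion_some_left hb]
  · rw [aunion_none_left h']
    cases ha : a p with
    | none => rw [aunion_none_left ha, h']
    | some t => rw [aunion_some_left ha]

/-- `aunion γ δ` agrees with `δ` wherever `δ` is defined, given consistency. -/
lemma aunion_eq_right {γ δ : Assembly T} (hcons : Consistent γ δ) {p}
    (h : (δ p).isSome) : aunion γ δ p = δ p := by
  obtain ⟨t, ht⟩ := Option.isSome_iff_exists.mp h
  cases hg : γ p with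
  | none => rw [aunion_none_left hg]
  | some s => rw [aunion_some_left hg, ht, hcons p s t hg ht]

lemma aunion_eq_left {γ δ : Assembly T} {p}
    (h : (γ p).isSome) : aunion γ δ p = γ p := by
  obtain ⟨t, ht⟩ := Option.isSome_iff_exists.mp h
  rw [aunion_some_left ht, ht]

lemma bond_congr (ts : TileSystem T) {α α' : Assembly T} {p q}
    (hp : α p = α' p) (hq : α q = α' q) : bond ts α p q = bond ts α' p q := by
  unfold bond; rw [hp, hq]

lemma strengthBetween_congr (ts : TileSystem T) {α α' : Assembly T}
    {A B : Finset (ℤ × ℤ)} (h : ∀ r, r ∈ A ∪ B → α r = α' r) :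
    strengthBetween ts α A B = strengthBetween ts α' A B :=
  Finset.sum_congr rfl fun p hp => Finset.sum_congr rfl fun q hq =>
    bond_congr ts (h p (Finset.mem_union_left _ hp)) (h q (Finset.mem_union_right _ hq))

lemma strengthBetween_mono (ts : TileSystem T) (α : Assembly T)
    {A' A B' B : Finset (ℤ × ℤ)} (hA : A' ⊆ A) (hB : B' ⊆ B) :
    strengthBetween ts α A' B' ≤ strengthBetween ts α A B := by
  unfold strengthBetween
  calc ∑ p ∈ A', ∑ q ∈ B', bond ts α p q
      ≤ ∑ p ∈ A', ∑ q ∈ B, bond ts α p q :=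
        Finset.sum_le_sum fun p _ => Finset.sum_le_sum_of_subset hB
    _ ≤ _ := Finset.sum_le_sum_of_subset hA

/-- Every producible assembly has a finite domain. -/
lemma producible_dom {ts : TileSystem T} {τ : ℕ} {α : Assembly T}
    (h : Producible ts τ α) : ∃ D : Finset (ℤ × ℤ), IsDom α D := by
  induction h with
  | single p t =>
      refine ⟨{p}, fun q => ?_⟩
      by_cases hq : q = p <;> simp [hq]
  | union hα hβ hdisj hstab ihα ihβ =>
      obtain ⟨Dα, hDα⟩ := ihα
      obtain ⟨Dβ, hDβ⟩ := ihβ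
      refine ⟨Dα ∪ Dβ, fun q => ?_⟩
      rw [aunion_isSome, Finset.mem_union, hDα, hDβ]

/-- Every producible assembly is stable. -/
lemma producible_stable {ts : TileSystem T} {τ : ℕ} {α : Assembly T}
    (h : Producible ts τ α) : Stable ts α τ := by
  induction h with
  | single p t =>
      intro D A B hD hAB hdisj hA hB
      exfalso
      have hDp : D = {p} := by
        ext q
        rw [← hD q]
        by_cases hq : q = p <;> simp [hq]
      have hA' : A = {p} :=
        Finset.Nonempty.subset_singleton_iff hA |>.mp
          (by rw [← hDp, ← hAB]; exact Finset.subset_union_left)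
      have hB' : B = {p} :=
        Finset.Nonempty.subset_singleton_iff hB |>.mp
          (by rw [← hDp, ← hAB]; exact Finset.subset_union_right)
      rw [hA', hB'] at hdisj
      simp [Finset.disjoint_left] at hdisj
  | union hα hβ hdisj hstab ihα ihβ => exact hstab

/-- The union of two stable, consistent, overlapping assemblies is stable. -/
lemma stable_aunion (ts : TileSystem T) (τ : ℕ) {γ δ : Assembly T}
    {Dγ Dδ : Finset (ℤ × ℤ)} (hDγ : IsDom γ Dγ) (hDδ : IsDom δ Dδ)
    (hsγ : Stable ts γ τ) (hsδ : Stable ts δ τ)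
    (hcons : Consistent γ δ) {p0 : ℤ × ℤ} (hp0γ : p0 ∈ Dγ) (hp0δ : p0 ∈ Dδ) :
    Stable ts (aunion γ δ) τ := by
  intro D A B hD hAB hdisj hA hB
  have hDeq : D = Dγ ∪ Dδ := by
    ext q
    rw [← hD q, aunion_isSome, Finset.mem_union, hDγ, hDδ]
  have hagree_δ : ∀ r, r ∈ Dδ → aunion γ δ r = δ r := fun r hr =>
    aunion_eq_right hcons ((hDδ r).mpr hr)
  have hagree_γ : ∀ r, r ∈ Dγ → aunion γ δ r = γ r := fun r hr =>
    aunion_eq_left ((hDγ r).mpr hr)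
  have hABD : A ∪ B = Dγ ∪ Dδ := by rw [hAB, hDeq]
  have hsubA : A ⊆ Dγ ∪ Dδ := hABD ▸ Finset.subset_union_left
  have hsubB : B ⊆ Dγ ∪ Dδ := hABD ▸ Finset.subset_union_right
  -- Reusable: stability from δ if both parts meet Dδ
  have fromδ : (A ∩ Dδ).Nonempty → (B ∩ Dδ).Nonempty →
      τ ≤ strengthBetween ts (aunion γ δ) A B := by
    intro hA' hB'
    have hpart : (A ∩ Dδ) ∪ (B ∩ Dδ) = Dδ := by
      rw [← Finset.union_inter_distrib_right, hABD,
        Finset.union_inter_cancel_right]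
    have hdisj' : Disjoint (A ∩ Dδ) (B ∩ Dδ) :=
      hdisj.mono Finset.inter_subset_left Finset.inter_subset_left
    have := hsδ Dδ (A ∩ Dδ) (B ∩ Dδ) hDδ hpart hdisj' hA' hB'
    calc τ ≤ strengthBetween ts δ (A ∩ Dδ) (B ∩ Dδ) := this
      _ = strengthBetween ts (aunion γ δ) (A ∩ Dδ) (B ∩ Dδ) := by
          refine (strengthBetween_congr ts fun r hr => ?_).symm
          rcases Finset.mem_union.mp hr with h | h <;>
            exact hagree_δ r (Finset.mem_inter.mp h).2
      _ ≤ strengthBetween ts (aunion γ δ) A B :=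
          strengthBetween_mono ts _ Finset.inter_subset_left Finset.inter_subset_left
  have fromγ : (A ∩ Dγ).Nonempty → (B ∩ Dγ).Nonempty →
      τ ≤ strengthBetween ts (aunion γ δ) A B := by
    intro hA' hB'
    have hpart : (A ∩ Dγ) ∪ (B ∩ Dγ) = Dγ := by
      rw [← Finset.union_inter_distrib_right, hABD]
      exact Finset.union_inter_cancel_left
    have hdisj' : Disjoint (A ∩ Dγ) (B ∩ Dγ) :=
      hdisj.mono Finset.inter_subset_left Finset.inter_subset_left
    have := hsγ Dγ (A ∩ Dγ) (B ∩ Dγ) hDγ hpart hdisj' hA' hB'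
    calc τ ≤ strengthBetween ts γ (A ∩ Dγ) (B ∩ Dγ) := this
      _ = strengthBetween ts (aunion γ δ) (A ∩ Dγ) (B ∩ Dγ) := by
          refine (strengthBetween_congr ts fun r hr => ?_).symm
          rcases Finset.mem_union.mp hr with h | h <;>
            exact hagree_γ r (Finset.mem_inter.mp h).2
      _ ≤ strengthBetween ts (aunion γ δ) A B :=
          strengthBetween_mono ts _ Finset.inter_subset_left Finset.inter_subset_left
  -- p0 lies in A or in B
  have hp0 : p0 ∈ A ∪ B := by rw [hABD]; exact Finset.mem_union_left _ hp0γ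
  by_cases hAδ : (A ∩ Dδ).Nonempty
  · by_cases hBδ : (B ∩ Dδ).Nonempty
    · exact fromδ hAδ hBδ
    · -- B ∩ Dδ = ∅, so B ⊆ Dγ; p0 ∈ Dδ so p0 ∉ B... need A ∩ Dγ ∋ ? use p0
      have hBγ : B ⊆ Dγ := by
        intro x hx
        rcases Finset.mem_union.mp (hsubB hx) with h | h
        · exact h
        · exact absurd ⟨x, Finset.mem_inter.mpr ⟨hx, h⟩⟩ hBδ
      have hp0A : p0 ∈ A := by
        rcases Finset.mem_union.mp hp0 with h | h
        · exact h
        · exact absurd ⟨p0, Finset.mem_inter.mpr ⟨h, hp0δ⟩⟩ hBδ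
      refine fromγ ⟨p0, Finset.mem_inter.mpr ⟨hp0A, hp0γ⟩⟩ ?_
      obtain ⟨b, hb⟩ := hB
      exact ⟨b, Finset.mem_inter.mpr ⟨hb, hBγ hb⟩⟩
  · -- A ∩ Dδ = ∅, so A ⊆ Dγ, p0 ∈ B
    have hAγ : A ⊆ Dγ := by
      intro x hx
      rcases Finset.mem_union.mp (hsubA hx) with h | h
      · exact h
      · exact absurd ⟨x, Finset.mem_inter.mpr ⟨hx, h⟩⟩ hAδ
    have hp0B : p0 ∈ B := by
      rcases Finset.mem_union.mp hp0 with h | h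
      · exact absurd ⟨p0, Finset.mem_inter.mpr ⟨h, hp0δ⟩⟩ hAδ
      · exact h
    refine fromγ ?_ ⟨p0, Finset.mem_inter.mpr ⟨hp0B, hp0γ⟩⟩
    obtain ⟨a, ha⟩ := hA
    exact ⟨a, Finset.mem_inter.mpr ⟨ha, hAγ ha⟩⟩

lemma consistent_aunion_left {α β₁ β₂ : Assembly T}
    (h : Consistent α (aunion β₁ β₂)) : Consistent α β₁ := by
  intro p t t' hα hβ
  exact h p t t' hα (aunion_some_left hβ)

lemma consistent_aunion_right {α β₁ β₂ : Assembly T}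
    (hdisj : ∀ p, β₁ p = none ∨ β₂ p = none)
    (h : Consistent α (aunion β₁ β₂)) : Consistent α β₂ := by
  intro p t t' hα hβ
  rcases hdisj p with h1 | h1
  · exact h p t t' hα (by rw [aunion_none_left h1]; exact hβ)
  · rw [h1] at hβ; exact absurd hβ (by simp)

lemma consistent_union_left {α β₁ β₂ : Assembly T}
    (hdisj : ∀ p, β₁ p = none ∨ β₂ p = none)
    (h2 : Consistent α β₂) : Consistent (aunion α β₁) β₂ := by
  intro p t t' hu hβ
  cases ha : α p with
  | some s =>
      rw [aunion_some_left ha] at hu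
      exact h2 p t t' (ha.trans hu) hβ
  | none =>
      rw [aunion_none_left ha] at hu
      rcases hdisj p with h1 | h1
      · rw [h1] at hu; exact absurd hu (by simp)
      · rw [h1] at hβ; exact absurd hβ (by simp)

/-- Main induction: producible ∪ producible with overlap is producible. -/
lemma union_producible_aux {ts : TileSystem T} {τ : ℕ} {β : Assembly T}
    (hβ : Producible ts τ β) :
    ∀ α : Assembly T, Producible ts τ α → Consistent α β →
      (∃ p, (α p).isSome ∧ (β p).isSome) → Producible ts τ (aunion α β) := by
  induction hβ with
  | single p t =>
      intro α hα hcons hover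
      obtain ⟨q, hq1, hq2⟩ := hover
      have hqp : q = p := by by_contra h; simp [h] at hq2
      subst hqp
      obtain ⟨t', ht'⟩ := Option.isSome_iff_exists.mp hq1
      have htt : t' = t := hcons q t' t ht' (by simp)
      have : aunion α (fun r => if r = q then some t else none) = α := by
        funext r
        cases hr : α r with
        | some s => exact aunion_some_left hr
        | none =>
            rw [aunion_none_left hr]
            have hrq : r ≠ q := fun h => by rw [h, ht'] at hr; exact absurd hr (by simp)
            simp [hrq]
      rw [this]; exact hα
  | @union β₁ β₂ hβ₁ hβ₂ hdisj hstab ih₁ ih₂ =>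
      intro α hα hcons hover
      have hcons₁ : Consistent α β₁ := consistent_aunion_left hcons
      have hcons₂ : Consistent α β₂ := consistent_aunion_right hdisj hcons
      obtain ⟨Dα, hDα⟩ := producible_dom hα
      have hβprod : Producible ts τ (aunion β₁ β₂) :=
        Producible.union hβ₁ hβ₂ hdisj hstab
      obtain ⟨Dβ, hDβ⟩ := producible_dom hβprod
      obtain ⟨p0, hp0α, hp0β⟩ := hover
      -- overall stability of aunion α (aunion β₁ β₂)
      have hstabU : Stable ts (aunion α (aunion β₁ β₂)) τ :=
        stable_aunion ts τ hDα hDβ (producible_stable hα) hstab hcons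
          ((hDα p0).mp hp0α) ((hDβ p0).mp hp0β)
      by_cases hov₁ : ∃ p, (α p).isSome ∧ (β₁ p).isSome
      · have hγ : Producible ts τ (aunion α β₁) := ih₁ α hα hcons₁ hov₁
        by_cases hov₂ : ∃ p, (α p).isSome ∧ (β₂ p).isSome
        · -- overlap with both parts: apply ih₂ to aunion α β₁
          have hov₂' : ∃ p, ((aunion α β₁) p).isSome ∧ (β₂ p).isSome := by
            obtain ⟨p, h1, h2⟩ := hov₂
            exact ⟨p, aunion_isSome.mpr (Or.inl h1), h2⟩
          have hcons' : Consistent (aunion α β₁) β₂ :=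
            consistent_union_left hdisj hcons₂
          have := ih₂ (aunion α β₁) hγ hcons' hov₂'
          rwa [aunion_assoc] at this
        · -- aunion α β₁ disjoint from β₂
          have hd : ∀ p, (aunion α β₁) p = none ∨ β₂ p = none := by
            intro p
            by_cases h2 : (β₂ p).isSome
            · left
              have hβ1 : β₁ p = none := by
                rcases hdisj p with h | h
                · exact h
                · rw [h] at h2; simp at h2
              have hαn : α p = none := by
                cases hap : α p with
                | none => rfl
                | some s => exact absurd ⟨p, by rw [hap]; simp, h2⟩ hov₂
              rw [aunion_none_left hαn, hβ1]
            · right; exact Option.not_isSome_iff_eq_none.mp h2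
          have hst : Stable ts (aunion (aunion α β₁) β₂) τ := by
            rw [aunion_assoc]; exact hstabU
          have := Producible.union hγ hβ₂ hd hst
          rwa [aunion_assoc] at this
      · -- α overlaps only β₂
        have hov₂ : ∃ p, (α p).isSome ∧ (β₂ p).isSome := by
          rcases Option.isSome_iff_exists.mp hp0β with ⟨t, ht⟩
          cases hb1 : β₁ p0 with
          | some s => exact absurd ⟨p0, hp0α, by rw [hb1]; simp⟩ hov₁
          | none =>
              refine ⟨p0, hp0α, ?_⟩
              rw [aunion_none_left hb1] at ht
              rw [ht]; simp
        have hγ : Producible ts τ (aunion α β₂) := ih₂ α hα hcons₂ hov₂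
        have hd : ∀ p, (aunion α β₂) p = none ∨ β₁ p = none := by
          intro p
          by_cases h1 : (β₁ p).isSome
          · left
            have hβ2 : β₂ p = none := by
              rcases hdisj p with h | h
              · rw [h] at h1; simp at h1
              · exact h
            have hαn : α p = none := by
              cases hap : α p with
              | none => rfl
              | some s => exact absurd ⟨p, by rw [hap]; simp, h1⟩ hov₁
            rw [aunion_none_left hαn, hβ2]
          · right; exact Option.not_isSome_iff_eq_none.mp h1
        have hcomm : aunion β₁ β₂ = aunion β₂ β₁ := aunion_comm_of_disjoint hdisj
        have hst : Stable ts (aunion (aunion α β₂) β₁) τ := by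
          rw [aunion_assoc, ← hcomm]; exact hstabU
        have := Producible.union hγ hβ₁ hd hst
        rw [aunion_assoc, ← hcomm] at this
        exact this

end Aux

/-- If `α` and `β` are producible at temperature `τ` in the
hierarchical model, consistent, and have overlapping domains, then `α ∪ β` is
producible. -/
theorem union_producible {T : Type} [Fintype T] (ts : TileSystem T)
    (τ : ℕ) (hτ : 0 < τ) (α β : Assembly T)
    (hα : Producible ts τ α) (hβ : Producible ts τ β)
    (hcons : Consistent α β)
    (hover : ∃ p, (α p).isSome ∧ (β p).isSome) :
    Producible ts τ (aunion α β) := by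
  exact union_producible_aux hβ α hα hcons hover
end

section
/- Let 𝒯 = (T, s, 1) be a seeded tile assembly system at temperature 1 with a single seed tile s placed at position p₀, and let α be a producible assembly of 𝒯 such that every producible assembly of 𝒯 is a subassembly of α. For distinct positions p, q ∈ dom α, the following are equivalent: (1) every producible assembly β of 𝒯 with q ∈ dom β satisfies p ∈ dom β; (2) every path in the binding graph of α from the seed position p₀ to q passes through p (equivalently, removing vertex p from the binding graph of α disconnects q from p₀). -/
/-- Producibility in the seeded model with seed assembly `σ` at temperature `τ`:
an assembly is producible if it is the seed, or is obtained from a producible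
assembly by placing a single tile at an empty position adjacent to the assembly
such that the result is `τ`-stable. -/
inductive SProducible {T : Type} (ts : TileSystem T) (σ : Assembly T) (τ : ℕ) :
    Assembly T → Prop where
  | seed : SProducible ts σ τ σ
  | attach {α : Assembly T} (p : ℤ × ℤ) (t : T) :
      SProducible ts σ τ α →
      α p = none →
      (∃ d ∈ dirs, (α (p + d)).isSome) →
      Stable ts (Function.update α p (some t)) τ →
      SProducible ts σ τ (Function.update α p (some t))

/-- In the seeded model, `α` is terminal if no tile can be attached `τ`-stably to it. -/
def STerminal {T : Type} (ts : TileSystem T) (τ : ℕ) (α : Assembly T) : Prop :=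
  ∀ (p : ℤ × ℤ) (t : T), α p = none →
    ¬ ((∃ d ∈ dirs, (α (p + d)).isSome) ∧ Stable ts (Function.update α p (some t)) τ)

/-- The seeded system uniquely produces `α` if its set of producible terminal
assemblies equals `{α}`. -/
def SUniquelyProduces {T : Type} (ts : TileSystem T) (σ : Assembly T) (τ : ℕ)
    (α : Assembly T) : Prop :=
  {γ : Assembly T | SProducible ts σ τ γ ∧ STerminal ts τ γ} = {α}

/-- The binding graph of `α` is connected: any two positions of its domain are
joined by a path of interacting positions. -/
def BindingConnected {T : Type} (ts : TileSystem T) (α : Assembly T) : Prop :=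
  ∀ p q, (α p).isSome → (α q).isSome → Relation.ReflTransGen (Interacts ts α) p q

section Helpers

variable {T : Type}

lemma neg_mem_dirs {d : ℤ × ℤ} (h : d ∈ dirs) : -d ∈ dirs := by
  fin_cases h <;> decide

lemma bond_congr_s11 {ts : TileSystem T} {γ γ' : Assembly T} {a b : ℤ × ℤ}
    (ha : γ' a = γ a) (hb : γ' b = γ b) : bond ts γ' a b = bond ts γ a b := by
  unfold bond; rw [ha, hb]

lemma bond_symm (ts : TileSystem T) (γ : Assembly T) (a b : ℤ × ℤ) :
    bond ts γ a b = bond ts γ b a := by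
  rcases ha : γ a with _ | ta <;> rcases hb : γ b with _ | tb <;>
    simp only [bond, ha, hb]
  by_cases h : b - a ∈ dirs ∧ ts.glue ta (b - a) = ts.glue tb (a - b)
  · rw [if_pos h, if_pos ⟨by simpa [neg_sub] using neg_mem_dirs h.1, h.2.symm⟩, h.2]
  · rw [if_neg h, if_neg ?_]
    rintro ⟨h1, h2⟩
    exact h ⟨by simpa [neg_sub] using neg_mem_dirs h1, h2.symm⟩

lemma interacts_symm (ts : TileSystem T) (γ : Assembly T) :
    Symmetric (Interacts ts γ) := by
  intro a b h
  unfold Interacts at *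
  rwa [bond_symm]

lemma bond_pos_elim {ts : TileSystem T} {γ : Assembly T} {a b : ℤ × ℤ}
    (h : 0 < bond ts γ a b) :
    ∃ ta tb, γ a = some ta ∧ γ b = some tb ∧ b - a ∈ dirs := by
  rcases ha : γ a with _ | ta
  · simp [bond, ha] at h
  rcases hb : γ b with _ | tb
  · simp [bond, ha, hb] at h
  refine ⟨ta, tb, rfl, rfl, ?_⟩
  by_contra hc
  simp [bond, ha, hb, hc] at h

lemma interacts_update {ts : TileSystem T} {γ : Assembly T} {c : ℤ × ℤ} {t : T}
    (hc : γ c = none) {a b : ℤ × ℤ} (h : Interacts ts γ a b) :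
    Interacts ts (Function.update γ c (some t)) a b := by
  obtain ⟨ta, tb, ha, hb, -⟩ := bond_pos_elim h
  have hac : a ≠ c := fun e => by rw [e, hc] at ha; cases ha
  have hbc : b ≠ c := fun e => by rw [e, hc] at hb; cases hb
  unfold Interacts at *
  rwa [bond_congr_s11 (Function.update_of_ne hac _ _) (Function.update_of_ne hbc _ _)]

lemma interacts_sub {ts : TileSystem T} {β γ : Assembly T}
    (hsub : Subassembly β γ) {a b : ℤ × ℤ} (h : Interacts ts β a b) :
    Interacts ts γ a b := by
  obtain ⟨ta, tb, ha, hb, -⟩ := bond_pos_elim h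
  unfold Interacts at *
  rwa [bond_congr_s11 ((hsub a ta ha).trans ha.symm) ((hsub b tb hb).trans hb.symm)]

lemma stable_of_connected (ts : TileSystem T) (γ : Assembly T)
    (h : BindingConnected ts γ) : Stable ts γ 1 := by
  rintro D A B hD hU hdisj ⟨a, ha⟩ ⟨b, hb⟩
  have hsa : (γ a).isSome := (hD a).2 (hU ▸ Finset.mem_union_left B ha)
  have hsb : (γ b).isSome := (hD b).2 (hU ▸ Finset.mem_union_right A hb)
  have key : ∀ b', Relation.ReflTransGen (Interacts ts γ) a b' → b' ∈ B →
      1 ≤ strengthBetween ts γ A B := by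
    intro b' hpath
    induction hpath with
    | refl => exact fun hab => absurd hab (Finset.disjoint_left.mp hdisj ha)
    | @tail m c hpm hmc ih =>
      intro hc
      obtain ⟨tm, tc, hgm, -, -⟩ := bond_pos_elim hmc
      have hmD : m ∈ D := (hD m).1 (by rw [hgm]; rfl)
      rw [← hU] at hmD
      rcases Finset.mem_union.mp hmD with hmA | hmB
      · calc (1 : ℕ) ≤ bond ts γ m c := hmc
          _ ≤ ∑ q ∈ B, bond ts γ m q :=
            Finset.single_le_sum (fun _ _ => Nat.zero_le _) hc
          _ ≤ strengthBetween ts γ A B :=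
            Finset.single_le_sum (f := fun p => ∑ q ∈ B, bond ts γ p q)
              (fun _ _ => Nat.zero_le _) hmA
      · exact ih hmB
  exact key b (h a b hsa hsb) hb

lemma sprod_mono {ts : TileSystem T} {σ β : Assembly T} {τ : ℕ}
    (h : SProducible ts σ τ β) : Subassembly σ β := by
  induction h with
  | seed => exact fun _ _ h => h
  | @attach γ c t hprod hnone hadj hstab ih =>
    intro r tr hr
    have hr' := ih r tr hr
    have hrc : r ≠ c := fun e => by rw [e, hnone] at hr'; cases hr'
    rw [Function.update_of_ne hrc]; exact hr'

lemma sprod_dom {ts : TileSystem T} {s : T} {p₀ : ℤ × ℤ} {β : Assembly T} {τ : ℕ}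
    (h : SProducible ts (fun r => if r = p₀ then some s else none) τ β) :
    ∃ D : Finset (ℤ × ℤ), IsDom β D := by
  induction h with
  | seed =>
    refine ⟨{p₀}, fun r => ?_⟩
    by_cases hr : r = p₀ <;> simp [hr]
  | @attach γ c t hprod hnone hadj hstab ih =>
    obtain ⟨D, hD⟩ := ih
    refine ⟨insert c D, fun r => ?_⟩
    by_cases hr : r = c
    · subst hr; simp
    · rw [Function.update_of_ne hr]
      simp [hD r, Finset.mem_insert, hr]

lemma sprod_connected (ts : TileSystem T) (s : T) (p₀ : ℤ × ℤ) {β : Assembly T}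
    (h : SProducible ts (fun r => if r = p₀ then some s else none) 1 β) :
    BindingConnected ts β := by
  induction h with
  | seed =>
    intro x y hx hy
    have hx' : x = p₀ := by by_contra hc; simp [hc] at hx
    have hy' : y = p₀ := by by_contra hc; simp [hc] at hy
    rw [hx', hy']
  | @attach γ c t hprod hnone hadj hstab ih =>
    obtain ⟨D, hD⟩ := sprod_dom hprod
    have hp₀ : γ p₀ = some s := sprod_mono hprod p₀ s (by simp)
    have hcD : c ∉ D := fun hm => by
      have := (hD c).2 hm
      rw [hnone] at this; cases this
    have hD' : IsDom (Function.update γ c (some t)) (insert c D) := by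
      intro r
      by_cases hr : r = c
      · subst hr; simp
      · rw [Function.update_of_ne hr]
        simp [hD r, Finset.mem_insert, hr]
    have hstr := hstab (insert c D) {c} D hD' (by rw [Finset.insert_eq])
      (Finset.disjoint_singleton_left.mpr hcD)
      ⟨c, Finset.mem_singleton_self c⟩
      ⟨p₀, (hD p₀).1 (by rw [hp₀]; rfl)⟩
    rw [strengthBetween, Finset.sum_singleton] at hstr
    obtain ⟨y, hyD, hby⟩ : ∃ y ∈ D, 0 < bond ts (Function.update γ c (some t)) c y := by
      by_contra hcon
      push_neg at hcon
      have : ∑ q ∈ D, bond ts (Function.update γ c (some t)) c q = 0 :=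
        Finset.sum_eq_zero (fun q hq => Nat.le_zero.mp (hcon q hq))
      omega
    have to_y : ∀ z, ((Function.update γ c (some t)) z).isSome →
        Relation.ReflTransGen (Interacts ts (Function.update γ c (some t))) z y := by
      intro z hz
      by_cases hzc : z = c
      · subst hzc; exact Relation.ReflTransGen.single hby
      · have hz' : (γ z).isSome := by rwa [Function.update_of_ne hzc] at hz
        have hy' : (γ y).isSome := (hD y).2 hyD
        exact Relation.ReflTransGen.mono (fun a b hab => interacts_update hnone hab) _ _ (ih z y hz' hy')
    intro x w hx hw
    exact (to_y x hx).trans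
      (by haveI : Std.Symm (Interacts ts (Function.update γ c (some t))) := ⟨fun a b h => interacts_symm ts _ h⟩; exact Std.Symm.symm _ _ (to_y w hw))

lemma build_along_path (ts : TileSystem T) (s : T) (p₀ : ℤ × ℤ) (α : Assembly T)
    (hall : ∀ β : Assembly T,
      SProducible ts (fun r => if r = p₀ then some s else none) 1 β →
      Subassembly β α)
    (p : ℤ × ℤ) (hp₀p : p₀ ≠ p) {c : ℤ × ℤ}
    (hpath : Relation.ReflTransGen
      (fun a b => Interacts ts α a b ∧ a ≠ p ∧ b ≠ p) p₀ c) :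
    ∃ β : Assembly T, SProducible ts (fun r => if r = p₀ then some s else none) 1 β ∧
      (β c).isSome ∧ β p = none := by
  induction hpath with
  | refl =>
    exact ⟨_, SProducible.seed, by simp, by simp [Ne.symm hp₀p]⟩
  | @tail m c hpm hmc ih =>
    obtain ⟨β, hβprod, hβm, hβp⟩ := ih
    by_cases hc : (β c).isSome
    · exact ⟨β, hβprod, hc, hβp⟩
    have hβc : β c = none := Option.not_isSome_iff_eq_none.mp hc
    obtain ⟨hint, hmp, hcp⟩ := hmc
    obtain ⟨tm, tc, ham, hac, hdir⟩ := bond_pos_elim hint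
    obtain ⟨tm', hβm'⟩ := Option.isSome_iff_exists.mp hβm
    have hαm : α m = some tm' := hall β hβprod m tm' hβm'
    have htm : tm' = tm := by rw [hαm] at ham; exact Option.some.inj ham
    have hmc' : m ≠ c := fun e => by rw [e, hβc] at hβm'; cases hβm'
    have hβ'm : (Function.update β c (some tc)) m = β m :=
      Function.update_of_ne hmc' _ _
    have hint' : Interacts ts (Function.update β c (some tc)) m c := by
      unfold Interacts
      rw [bond_congr_s11 (γ := α) (by rw [hβ'm, hβm', htm, ham])
        (by rw [Function.update_self, hac])]
      exact hint
    have hconnβ := sprod_connected ts s p₀ hβprod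
    have hconn' : BindingConnected ts (Function.update β c (some tc)) := by
      intro x w hx hw
      have to_m : ∀ z, ((Function.update β c (some tc)) z).isSome →
          Relation.ReflTransGen (Interacts ts (Function.update β c (some tc))) z m := by
        intro z hz
        by_cases hzc : z = c
        · subst hzc
          exact Relation.ReflTransGen.single (interacts_symm ts _ hint')
        · have hz' : (β z).isSome := by rwa [Function.update_of_ne hzc] at hz
          exact Relation.ReflTransGen.mono (fun a b hab => interacts_update hβc hab) _ _ (hconnβ z m hz' hβm)
      exact (to_m x hx).trans
        (by haveI : Std.Symm (Interacts ts (Function.update β c (some tc))) := ⟨fun a b h => interacts_symm ts _ h⟩; exact Std.Symm.symm _ _ (to_m w hw))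
    have hstab : Stable ts (Function.update β c (some tc)) 1 :=
      stable_of_connected ts _ hconn'
    refine ⟨Function.update β c (some tc),
      SProducible.attach c tc hβprod hβc ⟨m - c, ?_, ?_⟩ hstab,
      by simp, by rw [Function.update_of_ne (Ne.symm hcp)]; exact hβp⟩
    · simpa [neg_sub] using neg_mem_dirs hdir
    · have hmc2 : c + (m - c) = m := by ring
      rw [hmc2]; exact hβm

end Helpers

/-- Let `𝒯 = (T, s, 1)` be a seeded system at temperature 1
with single seed tile `s` at position `p₀`, and let `α` be a producible
assembly such that every producible assembly is a subassembly of `α`.  For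
distinct `p, q ∈ dom α`: every producible assembly containing `q` contains `p`
if and only if removing the vertex `p` from the binding graph of `α`
disconnects `q` from the seed position `p₀` (i.e., every path in the binding
graph of `α` from `p₀` to `q` passes through `p`). -/
theorem seeded_temp1_precedence_iff_cut_vertex {T : Type} [Fintype T]
    (ts : TileSystem T) (s : T) (p₀ : ℤ × ℤ) (α : Assembly T)
    (hα : SProducible ts (fun r => if r = p₀ then some s else none) 1 α)
    (hall : ∀ β : Assembly T,
      SProducible ts (fun r => if r = p₀ then some s else none) 1 β →
      Subassembly β α)
    (p q : ℤ × ℤ) (hp : (α p).isSome) (hq : (α q).isSome) (hpq : p ≠ q) :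
    (∀ β : Assembly T,
        SProducible ts (fun r => if r = p₀ then some s else none) 1 β →
        (β q).isSome → (β p).isSome) ↔
      ¬ Relation.ReflTransGen (fun a b => Interacts ts α a b ∧ a ≠ p ∧ b ≠ p) p₀ q := by
  constructor
  · intro h1 hpath
    have hp₀p : p₀ ≠ p := by
      rcases hpath.cases_head with h | ⟨c, ⟨_, hne, _⟩, _⟩
      · exact fun e => hpq (h ▸ e.symm)
      · exact hne
    obtain ⟨β, hβprod, hβq, hβp⟩ := build_along_path ts s p₀ α hall p hp₀p hpath
    have := h1 β hβprod hβq
    rw [hβp] at this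
    cases this
  · intro h2 β hβ hβq
    by_contra hcon
    have hβp : β p = none := Option.not_isSome_iff_eq_none.mp hcon
    have hconn := sprod_connected ts s p₀ hβ
    have hp₀β : β p₀ = some s := sprod_mono hβ p₀ s (by simp)
    have hpath := hconn p₀ q (by rw [hp₀β]; rfl) hβq
    refine h2 (Relation.ReflTransGen.mono (fun a b hab => ?_) _ _ hpath)
    obtain ⟨ta, tb, ha, hb, -⟩ := bond_pos_elim hab
    refine ⟨interacts_sub (hall β hβ) hab, ?_, ?_⟩
    · intro e; rw [e, hβp] at ha; cases ha
    · intro e; rw [e, hβp] at hb; cases hb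
end
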